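/- arXiv:2107.09345 — 2 statements merged into one kernel-verified Lean document; each statement's English description precedes it below -/
import Mathlib

section
/- Let A be a commutative unital C*-algebra with a faithful state τ, let B be a semifinite von Neumann algebra with normal faithful semifinite trace Tr, and let F : A → B be a linear map satisfying τ(x*y) = Tr(F(x)*F(y)) for all x, y ∈ A (Parseval) and ‖F(x)‖ ≤ τ(|x|) for all x ∈ A (Riemann–Lebesgue). Then for every x ∈ A with x ≠ 0, denoting by [x] the support projection of x in the von Neumann completion of A and by [F(x)] the support projection of F(x) in B, one has 1 ≤ τ([x]) · Tr([F(x)]). -/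
open Complex in
lemma aux_cs {A : Type*} [CommCStarAlgebra A] [PartialOrder A] [StarOrderedRing A]
    (τ : A →ₗ[ℂ] ℂ)
    (hτpos : ∀ a : A, 0 ≤ a → 0 ≤ (τ a).re ∧ (τ a).im = 0)
    (a b : A) :
    Complex.normSq (τ (star a * b)) ≤ (τ (star a * a)).re * (τ (star b * b)).re := by
  have hq : ∀ c : A, 0 ≤ (τ (star c * c)).re ∧ (τ (star c * c)).im = 0 :=
    fun c => hτpos _ (star_mul_self_nonneg c)
  have hexp : ∀ t : ℂ, τ (star (a + t • b) * (a + t • b)) =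
      τ (star a * a) + t * τ (star a * b) + (starRingEnd ℂ) t * τ (star b * a)
        + (t * (starRingEnd ℂ) t) * τ (star b * b) := by
    intro t
    have : star (a + t • b) * (a + t • b) =
        star a * a + t • (star a * b) + (starRingEnd ℂ t) • (star b * a)
          + (t * starRingEnd ℂ t) • (star b * b) := by
      simp [star_add, star_smul, mul_add, add_mul, smul_mul_assoc, mul_smul_comm, smul_smul,
        Complex.star_def]
      abel
    rw [this]
    simp [map_add, map_smul, smul_eq_mul]
  set u := τ (star a * b) with hu
  set v := τ (star b * a) with hv
  set P := τ (star a * a) with hP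
  set Q := τ (star b * b) with hQ
  have hPim : P.im = 0 := (hq a).2
  have hQim : Q.im = 0 := (hq b).2
  have hPre : 0 ≤ P.re := (hq a).1
  have hQre : 0 ≤ Q.re := (hq b).1
  -- hermitian symmetry: v = conj u
  have h1 := (hq (a + (1:ℂ) • b)).2
  have hI := (hq (a + (Complex.I : ℂ) • b)).2
  rw [hexp] at h1 hI
  simp [Complex.add_im, Complex.mul_im, hPim, hQim, Complex.mul_re] at h1 hI
  have hvre : v.re = u.re := by linarith
  have hvim : v.im = -u.im := by linarith
  -- quadratic in s
  have hquad : ∀ s : ℝ, 0 ≤ (Q.re * Complex.normSq u) * (s * s)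
      + (-(2 * Complex.normSq u)) * s + P.re := by
    intro s
    have h := (hq (a + (-(s:ℂ) * (starRingEnd ℂ) u) • b)).1
    rw [hexp] at h
    simp only [Complex.add_re, Complex.mul_re, Complex.mul_im, map_mul, Complex.conj_conj,
      map_neg, Complex.conj_ofReal, Complex.neg_re, Complex.neg_im, Complex.ofReal_re,
      Complex.ofReal_im, Complex.conj_re, Complex.conj_im, hPim, hQim, hvre, hvim] at h
    have hns : Complex.normSq u = u.re * u.re + u.im * u.im := Complex.normSq_apply u
    rw [hns]
    ring_nf
    ring_nf at h
    linarith
  have hd := discrim_le_zero hquad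
  rw [discrim] at hd
  nlinarith [Complex.normSq_nonneg u, sq_nonneg (Complex.normSq u), mul_nonneg hPre hQre]


/-- Donoho–Stark uncertainty principle for a Fourier-type transform `F` from a
commutative unital C*-algebra with faithful state `τ` to an algebra with positive
tracial functional `Tr`, satisfying Parseval's identity and the Riemann–Lebesgue
bound: `1 ≤ τ([x]) · Tr([F x])` for every `x ≠ 0`, where `[x]` and `[F x]` denote
the support projections. -/
theorem stmt_7 {A B : Type*} [CommCStarAlgebra A] [PartialOrder A] [StarOrderedRing A]
    [CStarAlgebra B] [PartialOrder B] [StarOrderedRing B]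
    (τ : A →ₗ[ℂ] ℂ) (hτ1 : τ 1 = 1)
    (hτpos : ∀ a : A, 0 ≤ a → 0 ≤ (τ a).re ∧ (τ a).im = 0)
    (hτfaith : ∀ a : A, τ (star a * a) = 0 → a = 0)
    (Tr : B →ₗ[ℂ] ℂ)
    (hTrpos : ∀ b : B, 0 ≤ b → 0 ≤ (Tr b).re ∧ (Tr b).im = 0)
    (hTrtrace : ∀ b c : B, Tr (b * c) = Tr (c * b))
    (F : A →ₗ[ℂ] B)
    (hParseval : ∀ x y : A, τ (star x * y) = Tr (star (F x) * F y))
    (hRL : ∀ x : A, ‖F x‖ ≤ (τ (CFC.sqrt (star x * x))).re)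
    (x : A) (hx : x ≠ 0)
    (p : A) (hp : IsIdempotentElem p) (hpstar : star p = p) (hxp : x * p = x)
    (hpmin : ∀ q : A, IsIdempotentElem q → star q = q → x * q = x → p ≤ q)
    (e : B) (he : IsIdempotentElem e) (hestar : star e = e) (hFe : F x * e = F x)
    (hemin : ∀ f : B, IsIdempotentElem f → star f = f → F x * f = F x → e ≤ f) :
    1 ≤ (τ p).re * (Tr e).re := by
  have hxx : (0:A) ≤ star x * x := star_mul_self_nonneg x
  set b := CFC.sqrt (star x * x) with hb
  have hbnn : (0:A) ≤ b := CFC.sqrt_nonneg _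
  have hbsa : star b = b := (IsSelfAdjoint.of_nonneg hbnn).star_eq
  have hbsq : b * b = star x * x := by
    have := CFC.sq_sqrt (star x * x) hxx
    rw [sq] at this; exact this
  have hpp : p * p = p := hp
  have hee : e * e = e := he
  -- b * p = b
  have hb2p : (b * b) * p = b * b := by rw [hbsq, mul_assoc, hxp]
  have hbp : b * p = b := by
    have hc : star (b - b * p) * (b - b * p) = 0 := by
      have hst : star (b - b * p) = b - b * p := by
        rw [star_sub, star_mul, hbsa, hpstar, mul_comm p b]
      rw [hst]
      calc (b - b*p) * (b - b*p)
          = (b*b) - (b*b)*p - ((b*b)*p - (b*b)*(p*p)) := by ring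
        _ = 0 := by rw [hpp, hb2p]; abel
    have := (CStarRing.star_mul_self_eq_zero_iff _).mp hc
    have h0 : b - b * p = 0 := this
    rw [sub_eq_zero] at h0; exact h0.symm
  -- real quantities
  set s : ℝ := ‖F x‖ with hs
  set t : ℝ := (τ b).re with ht
  set P : ℝ := (τ p).re with hP
  set E : ℝ := (Tr e).re with hE
  have hpnn : (0:A) ≤ p := by
    have : p = star p * p := by rw [hpstar, hpp]
    rw [this]; exact star_mul_self_nonneg p
  have henn : (0:B) ≤ e := by
    have : e = star e * e := by rw [hestar, hee]
    rw [this]; exact star_mul_self_nonneg e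
  have hPnn : 0 ≤ P := (hτpos p hpnn).1
  have hEnn : 0 ≤ E := (hTrpos e henn).1
  -- s > 0
  have hspos : 0 < s := by
    rcases lt_or_eq_of_le (norm_nonneg (F x)) with h | h
    · exact h
    · exfalso
      have hFx0 : F x = 0 := by rw [← norm_eq_zero]; exact h.symm
      have : τ (star x * x) = 0 := by
        rw [hParseval x x, hFx0]; simp
      exact hx (hτfaith x this)
  -- s ≤ t
  have hst : s ≤ t := hRL x
  -- t^2 ≤ (τ (star x * x)).re * P  via Cauchy-Schwarz
  have hτbim : (τ b).im = 0 := (hτpos b hbnn).2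
  have hCS := aux_cs τ hτpos b p
  rw [hbsa, hbp] at hCS
  have hpsp : star p * p = p := by rw [hpstar, hpp]
  rw [hbsq, hpsp] at hCS
  have ht2 : t * t ≤ (τ (star x * x)).re * P := by
    have : Complex.normSq (τ b) = t * t := by
      rw [Complex.normSq_apply, hτbim, ht]; ring_nf
    rw [this] at hCS; exact hCS
  -- (τ (star x * x)).re = (Tr (star (F x) * F x)).re
  have hPar := hParseval x x
  -- Tr bound : (Tr (star (F x) * F x)).re ≤ s * s * E
  have haee : star (F x) * F x = e * (star (F x) * F x) * e := by
    conv_lhs => rw [← hFe]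
    rw [star_mul, hestar]
    simp [mul_assoc]
  have hTrBound : (Tr (star (F x) * F x)).re ≤ s * s * E := by
    set a : B := star (F x) * F x with ha
    have hasa : IsSelfAdjoint a := IsSelfAdjoint.of_nonneg (star_mul_self_nonneg (F x))
    have hle : a ≤ algebraMap ℝ B ‖a‖ := IsSelfAdjoint.le_algebraMap_norm_self hasa
    have hcle : e * a * e ≤ e * (algebraMap ℝ B ‖a‖) * e := by
      have := star_left_conjugate_le_conjugate hle e
      rwa [hestar] at this
    have hrhs : e * (algebraMap ℝ B ‖a‖) * e = ‖a‖ • e := by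
      rw [Algebra.algebraMap_eq_smul_one]
      rw [mul_smul_comm, mul_one, smul_mul_assoc, hee]
    rw [← haee, hrhs] at hcle
    have hsub : (0:B) ≤ ‖a‖ • e - a := sub_nonneg.mpr hcle
    have hTr := (hTrpos _ hsub).1
    have hsmul : (‖a‖ : ℝ) • e = ((‖a‖ : ℂ)) • e := by
      simp [Complex.coe_smul]
    have hTre : (Tr (‖a‖ • e)).re = ‖a‖ * E := by
      rw [hsmul, map_smul]
      simp [Complex.smul_re, hE]
    rw [map_sub, Complex.sub_re, hTre] at hTr
    have hna : ‖a‖ = s * s := CStarRing.norm_star_mul_self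
    nlinarith [hTr]
  have hA0 : (τ (star x * x)).re ≤ s * s * E := by
    rw [hPar]; exact hTrBound
  -- combine
  have hss : s * s ≤ t * t :=
    mul_le_mul hst hst (le_of_lt hspos) (le_trans (le_of_lt hspos) hst)
  have h1 : (τ (star x * x)).re * P ≤ s * s * E * P :=
    mul_le_mul_of_nonneg_right hA0 hPnn
  have h2 : s * s ≤ s * s * (P * E) := by nlinarith
  have hss0 : 0 < s * s := mul_pos hspos hspos
  nlinarith
end

section
/- Let A be a commutative unital C*-algebra with faithful state τ and define for x, y ∈ A a bilinear convolution x ∗ y such that: (i) x ∗ y ≥ 0 whenever x, y ≥ 0, (ii) τ(x ∗ y) = τ(x) τ(y) whenever x, y ≥ 0. Then for all x, y ∈ A (using ‖z‖₁ := τ(|z|)) one has ‖x ∗ y‖₁ ≤ ‖x‖₁ ‖y‖₁, provided each element of A can be L∞-approximated by finite sums Σ_m ν^m x^m with |ν^m| = 1 scalars and x^m ≥ 0 with Σ_m x^m = |x|, and ∗ is continuous in each variable for the operator norm. -/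
section Helpers

open WeakDual WeakDual.CharacterSpace

variable {A : Type*} [CommCStarAlgebra A] [PartialOrder A] [StarOrderedRing A]

/-- Characters take nonnegative real values on nonnegative elements. -/
lemma young_char_nonneg (φ : characterSpace ℂ A) {a : A} (ha : 0 ≤ a) :
    0 ≤ (φ a).re ∧ (φ a).im = 0 := by
  set t := CFC.sqrt a with ht_def
  have htnn : (0 : A) ≤ t := CFC.sqrt_nonneg _
  have ht : t * t = a := CFC.sqrt_mul_sqrt_self a ha
  have ht' : star t = t := (IsSelfAdjoint.of_nonneg htnn).star_eq
  have him' : (φ t).im = 0 := by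
    have h := map_star φ t
    rw [ht'] at h
    have h2 := congrArg Complex.im h
    simp only [Complex.star_def, Complex.conj_im] at h2
    linarith
  have := congrArg φ ht
  rw [map_mul] at this
  constructor
  · rw [← this, Complex.mul_re, him']
    nlinarith [sq_nonneg ((φ t).re)]
  · rw [← this, Complex.mul_im, him']
    ring

/-- Characters send the absolute value to the norm of the value. -/
lemma young_char_abs (φ : characterSpace ℂ A) (z : A) :
    φ (CFC.sqrt (star z * z)) = (‖φ z‖ : ℂ) := by
  set s := CFC.sqrt (star z * z) with hs_def
  have hsnn : (0 : A) ≤ s := CFC.sqrt_nonneg _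
  obtain ⟨hre, him⟩ := young_char_nonneg φ hsnn
  have hs : s * s = star z * z :=
    CFC.sqrt_mul_sqrt_self _ (star_mul_self_nonneg z)
  have hsq : φ s * φ s = star (φ z) * φ z := by
    rw [← map_mul, hs, map_mul, map_star]
  have hre_eq : φ s = ((φ s).re : ℂ) :=
    Complex.ext rfl (by simpa using him)
  have hzn : ‖φ z‖ * ‖φ z‖ = (φ z).re * (φ z).re + (φ z).im * (φ z).im := by
    have h1 := Complex.sq_norm (φ z)
    rw [Complex.normSq_apply] at h1
    nlinarith [h1]
  have hnorm : (φ s).re * (φ s).re = ‖φ z‖ * ‖φ z‖ := by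
    have h := congrArg Complex.re hsq
    simp only [Complex.star_def, Complex.mul_re, Complex.conj_re, Complex.conj_im,
      him] at h
    rw [hzn]
    nlinarith [h]
  have : (φ s).re = ‖φ z‖ :=
    (mul_self_inj hre (norm_nonneg _)).mp hnorm
  rw [hre_eq, this]

/-- An element with nonnegative character values is nonnegative. -/
lemma young_nonneg_of_char {a : A} (ha : IsSelfAdjoint a)
    (h : ∀ φ : characterSpace ℂ A, 0 ≤ (φ a).re) : 0 ≤ a := by
  rw [StarOrderedRing.nonneg_iff_spectrum_nonneg (R := ℝ) a ha]
  intro x hx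
  have hx' : (algebraMap ℝ ℂ x) ∈ spectrum ℂ a := spectrum.algebraMap_mem ℂ hx
  rw [WeakDual.CharacterSpace.mem_spectrum_iff_exists] at hx'
  obtain ⟨φ, hφ⟩ := hx'
  have := h φ
  rw [hφ] at this
  simpa using this

/-- Triangle inequality for the absolute value in a commutative C*-algebra. -/
lemma young_abs_add (u v : A) :
    CFC.sqrt (star (u + v) * (u + v)) ≤
      CFC.sqrt (star u * u) + CFC.sqrt (star v * v) := by
  rw [← sub_nonneg]
  have hsa : IsSelfAdjoint
      (CFC.sqrt (star u * u) + CFC.sqrt (star v * v) -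
        CFC.sqrt (star (u + v) * (u + v))) := by
    have h1 : IsSelfAdjoint (CFC.sqrt (star u * u)) :=
      IsSelfAdjoint.of_nonneg (CFC.sqrt_nonneg _)
    have h2 : IsSelfAdjoint (CFC.sqrt (star v * v)) :=
      IsSelfAdjoint.of_nonneg (CFC.sqrt_nonneg _)
    have h3 : IsSelfAdjoint (CFC.sqrt (star (u + v) * (u + v))) :=
      IsSelfAdjoint.of_nonneg (CFC.sqrt_nonneg _)
    exact (h1.add h2).sub h3
  refine young_nonneg_of_char hsa fun φ => ?_
  rw [map_sub, map_add, young_char_abs, young_char_abs, young_char_abs, map_add]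
  have := norm_add_le (φ u) (φ v)
  simp only [Complex.sub_re, Complex.add_re, Complex.ofReal_re]
  linarith

lemma young_abs_of_nonneg {p : A} (hp : 0 ≤ p) : CFC.sqrt (star p * p) = p := by
  rw [(IsSelfAdjoint.of_nonneg hp).star_eq]
  exact CFC.sqrt_mul_self p hp

lemma young_abs_smul_unit {ν : ℂ} (hν : ‖ν‖ = 1) {c : A} (hc : 0 ≤ c) :
    CFC.sqrt (star (ν • c) * (ν • c)) = c := by
  have hstar : star (ν • c) = (starRingEnd ℂ) ν • c := by
    rw [star_smul, (IsSelfAdjoint.of_nonneg hc).star_eq]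
    rfl
  have hν1 : (starRingEnd ℂ) ν * ν = 1 := by
    rw [mul_comm, Complex.mul_conj]
    have habs : ‖ν‖ = 1 := by rw [hν]
    have : Complex.normSq ν = 1 := by
      rw [← Complex.sq_norm, habs]; norm_num
    rw [this]; norm_num
  have hmul : star (ν • c) * (ν • c) = c * c := by
    rw [hstar, smul_mul_smul_comm, hν1, one_smul]
  rw [hmul]
  exact CFC.sqrt_mul_self c hc

lemma young_abs_norm (z : A) : ‖CFC.sqrt (star z * z)‖ = ‖z‖ := by
  have hsnn : (0 : A) ≤ CFC.sqrt (star z * z) := CFC.sqrt_nonneg _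
  have hs : CFC.sqrt (star z * z) * CFC.sqrt (star z * z) = star z * z :=
    CFC.sqrt_mul_sqrt_self _ (star_mul_self_nonneg z)
  have h1 : ‖CFC.sqrt (star z * z)‖ * ‖CFC.sqrt (star z * z)‖ = ‖z‖ * ‖z‖ := by
    calc ‖CFC.sqrt (star z * z)‖ * ‖CFC.sqrt (star z * z)‖
        = ‖star (CFC.sqrt (star z * z)) * CFC.sqrt (star z * z)‖ := by
          rw [CStarRing.norm_star_mul_self]
      _ = ‖star z * z‖ := by
          rw [(IsSelfAdjoint.of_nonneg hsnn).star_eq, hs]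
      _ = ‖z‖ * ‖z‖ := CStarRing.norm_star_mul_self
  exact (mul_self_inj (norm_nonneg _) (norm_nonneg _)).mp h1

end Helpers

/-- Young's inequality for `r = p = q = 1`: a bilinear convolution on a commutative
unital C*-algebra with faithful state `τ` which is positive and multiplicative for
`τ` on positive elements, continuous in each variable, satisfies
`‖x ∗ y‖₁ ≤ ‖x‖₁ ‖y‖₁`, provided elements admit polar-type approximations by
finite combinations of positives summing to the modulus. -/
theorem stmt_14 {A : Type*} [CommCStarAlgebra A] [PartialOrder A] [StarOrderedRing A]
    (τ : A →ₗ[ℂ] ℂ) (hτ1 : τ 1 = 1)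
    (hτpos : ∀ a : A, 0 ≤ a → 0 ≤ (τ a).re ∧ (τ a).im = 0)
    (hτfaith : ∀ a : A, τ (star a * a) = 0 → a = 0)
    (conv : A →ₗ[ℂ] A →ₗ[ℂ] A)
    (hconvpos : ∀ x y : A, 0 ≤ x → 0 ≤ y → 0 ≤ conv x y)
    (hconvτ : ∀ x y : A, 0 ≤ x → 0 ≤ y → τ (conv x y) = τ x * τ y)
    (hcont : ∀ y : A, Continuous (fun x : A => conv x y) ∧
      Continuous (fun x : A => conv y x))
    (happrox : ∀ x : A, ∀ ε : ℝ, 0 < ε → ∃ (n : ℕ) (ν : Fin n → ℂ) (c : Fin n → A),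
      (∀ m, ‖ν m‖ = 1) ∧ (∀ m, 0 ≤ c m) ∧
      (∑ m, c m = CFC.sqrt (star x * x)) ∧
      ‖x - ∑ m, ν m • c m‖ < ε) :
    ∀ x y : A,
      (τ (CFC.sqrt (star (conv x y) * conv x y))).re ≤
        (τ (CFC.sqrt (star x * x))).re * (τ (CFC.sqrt (star y * y))).re := by
  -- the L¹ seminorm
  set N : A → ℝ := fun z => (τ (CFC.sqrt (star z * z))).re with hN_def
  -- monotonicity of τ on re
  have τ_mono : ∀ a b : A, a ≤ b → (τ a).re ≤ (τ b).re := by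
    intro a b hab
    have h := (hτpos (b - a) (sub_nonneg.mpr hab)).1
    rw [map_sub, Complex.sub_re] at h
    linarith
  -- subadditivity of N
  have N_add : ∀ u v : A, N (u + v) ≤ N u + N v := by
    intro u v
    have h := τ_mono _ _ (young_abs_add u v)
    rw [map_add, Complex.add_re] at h
    exact h
  -- N bounded by the operator norm
  have N_le_norm : ∀ z : A, N z ≤ ‖z‖ := by
    intro z
    have hsnn : (0 : A) ≤ CFC.sqrt (star z * z) := CFC.sqrt_nonneg _
    have h1 : CFC.sqrt (star z * z) ≤ algebraMap ℝ A ‖CFC.sqrt (star z * z)‖ :=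
      IsSelfAdjoint.le_algebraMap_norm_self (IsSelfAdjoint.of_nonneg hsnn)
    rw [young_abs_norm] at h1
    have h2 := τ_mono _ _ h1
    have h3 : τ (algebraMap ℝ A ‖z‖) = (‖z‖ : ℂ) := by
      rw [IsScalarTower.algebraMap_apply ℝ ℂ A, Algebra.algebraMap_eq_smul_one,
        map_smul, hτ1, smul_eq_mul, mul_one, Complex.coe_algebraMap]
    rw [h3] at h2
    simpa using h2
  -- N over sums
  have N_sum : ∀ {n : ℕ} (f : Fin n → A), N (∑ i, f i) ≤ ∑ i, N (f i) := by
    intro n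
    induction n with
    | zero =>
      intro f
      simp only [Finset.univ_eq_empty, Finset.sum_empty, hN_def]
      have : CFC.sqrt (star (0 : A) * 0) = 0 := by
        simpa using young_abs_of_nonneg (le_refl (0 : A))
      simp [this]
    | succ n ih =>
      intro f
      rw [Fin.sum_univ_succ, Fin.sum_univ_succ]
      calc N (f 0 + ∑ i : Fin n, f i.succ)
          ≤ N (f 0) + N (∑ i : Fin n, f i.succ) := N_add _ _
        _ ≤ N (f 0) + ∑ i : Fin n, N (f i.succ) := by
            have := ih (fun i => f i.succ)
            linarith
  intro x y
  -- show N (conv x y) ≤ R + ε for every ε > 0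
  refine le_of_forall_pos_le_add fun ε hε => ?_
  -- continuous linear map in the first variable
  set F : A →L[ℂ] A := ⟨conv.flip y, (hcont y).1⟩ with hF_def
  have hε₁ : (0 : ℝ) < ε / (2 * (‖F‖ + 1)) := by positivity
  obtain ⟨n, ν, c, hν, hc, hsum, hclose⟩ := happrox x _ hε₁
  set x' : A := ∑ m, ν m • c m with hx'_def
  set G : A →L[ℂ] A := ⟨conv x', (hcont x').2⟩ with hG_def
  have hε₂ : (0 : ℝ) < ε / (2 * (‖G‖ + 1)) := by positivity
  obtain ⟨k, μ, d, hμ, hd, hsum', hclose'⟩ := happrox y _ hε₂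
  set y' : A := ∑ j, μ j • d j with hy'_def
  -- decompose
  have hdecomp : conv x y = conv (x - x') y + conv x' (y - y') + conv x' y' := by
    simp only [map_sub, LinearMap.sub_apply]
    abel
  -- first error term
  have hbound1 : N (conv (x - x') y) ≤ ε / 2 := by
    have h1 : N (conv (x - x') y) ≤ ‖conv (x - x') y‖ := N_le_norm _
    have h2 : ‖F (x - x')‖ ≤ ‖F‖ * ‖x - x'‖ := F.le_opNorm _
    have h3 : (F : A → A) (x - x') = conv (x - x') y := rfl
    have h4 : ‖F‖ * ‖x - x'‖ ≤ (‖F‖ + 1) * (ε / (2 * (‖F‖ + 1))) := by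
      have hF0 : (0 : ℝ) ≤ ‖F‖ := norm_nonneg _
      have := hclose.le
      nlinarith [norm_nonneg (x - x')]
    have h5 : (‖F‖ + 1) * (ε / (2 * (‖F‖ + 1))) = ε / 2 := by
      field_simp
    rw [h3] at h2
    linarith
  -- second error term
  have hbound2 : N (conv x' (y - y')) ≤ ε / 2 := by
    have h1 : N (conv x' (y - y')) ≤ ‖conv x' (y - y')‖ := N_le_norm _
    have h2 : ‖G (y - y')‖ ≤ ‖G‖ * ‖y - y'‖ := G.le_opNorm _
    have h3 : (G : A → A) (y - y') = conv x' (y - y') := rfl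
    have h4 : ‖G‖ * ‖y - y'‖ ≤ (‖G‖ + 1) * (ε / (2 * (‖G‖ + 1))) := by
      have hG0 : (0 : ℝ) ≤ ‖G‖ := norm_nonneg _
      have := hclose'.le
      nlinarith [norm_nonneg (y - y')]
    have h5 : (‖G‖ + 1) * (ε / (2 * (‖G‖ + 1))) = ε / 2 := by
      field_simp
    rw [h3] at h2
    linarith
  -- main term
  have hmain : N (conv x' y') ≤
      (τ (CFC.sqrt (star x * x))).re * (τ (CFC.sqrt (star y * y))).re := by
    have hexp : conv x' y' = ∑ m, ∑ j, (ν m * μ j) • conv (c m) (d j) := by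
      simp only [hx'_def, hy'_def, map_sum, map_smul, LinearMap.coe_sum,
        Finset.sum_apply, LinearMap.smul_apply, Finset.smul_sum, smul_smul]
      rw [Finset.sum_comm]
      exact Finset.sum_congr rfl fun m _ => Finset.sum_congr rfl fun j _ => by
        rw [mul_comm]
    rw [hexp]
    calc N (∑ m, ∑ j, (ν m * μ j) • conv (c m) (d j))
        ≤ ∑ m, N (∑ j, (ν m * μ j) • conv (c m) (d j)) := N_sum _
      _ ≤ ∑ m, ∑ j, N ((ν m * μ j) • conv (c m) (d j)) :=
          Finset.sum_le_sum fun m _ => N_sum _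
      _ = ∑ m, ∑ j, (τ (c m)).re * (τ (d j)).re := by
          refine Finset.sum_congr rfl fun m _ => Finset.sum_congr rfl fun j _ => ?_
          have hunit : ‖ν m * μ j‖ = 1 := by rw [norm_mul, hν m, hμ j, one_mul]
          have hpos : (0 : A) ≤ conv (c m) (d j) := hconvpos _ _ (hc m) (hd j)
          have habs : CFC.sqrt (star ((ν m * μ j) • conv (c m) (d j)) *
              ((ν m * μ j) • conv (c m) (d j))) = conv (c m) (d j) :=
            young_abs_smul_unit hunit hpos
          rw [hN_def]
          simp only
          rw [habs, hconvτ _ _ (hc m) (hd j), Complex.mul_re,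
            (hτpos (c m) (hc m)).2, (hτpos (d j) (hd j)).2]
          ring
      _ = (∑ m, (τ (c m)).re) * (∑ j, (τ (d j)).re) := by
          rw [Finset.sum_mul_sum]
      _ = (τ (CFC.sqrt (star x * x))).re * (τ (CFC.sqrt (star y * y))).re := by
          congr 1
          · rw [← hsum, map_sum, Complex.re_sum]
          · rw [← hsum', map_sum, Complex.re_sum]
  -- combine
  have hsplit : N (conv x y) ≤ N (conv (x - x') y) + N (conv x' (y - y')) +
      N (conv x' y') := by
    rw [hdecomp]
    calc N (conv (x - x') y + conv x' (y - y') + conv x' y')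
        ≤ N (conv (x - x') y + conv x' (y - y')) + N (conv x' y') := N_add _ _
      _ ≤ N (conv (x - x') y) + N (conv x' (y - y')) + N (conv x' y') := by
          have := N_add (conv (x - x') y) (conv x' (y - y'))
          linarith
  have : N (conv x y) ≤
      (τ (CFC.sqrt (star x * x))).re * (τ (CFC.sqrt (star y * y))).re + ε := by
    calc N (conv x y) ≤ _ := hsplit
      _ ≤ ε / 2 + ε / 2 +
          (τ (CFC.sqrt (star x * x))).re * (τ (CFC.sqrt (star y * y))).re := by
          linarith
      _ = _ := by ring
  exact this
end
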